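/- arXiv:1003.5511 — 2 statements merged into one kernel-verified Lean document; each statement's English description precedes it below -/
import Mathlib

section
/- Let C be a symmetric monoidal category with a natural number object N (in the Paré–Román sense: for any c : 1 → A and f : A → A there is a unique h : N → A with h ∘ 0 = c and h ∘ succ = f ∘ h). Then N carries a commutative comonoid structure: the unique morphisms w_N : N → 1 with w_N ∘ 0 = id_1 and w_N ∘ succ = w_N, and c_N : N → N ⊗ N with c_N ∘ 0 = (0 ⊗ 0) ∘ λ⁻¹ and c_N ∘ succ = (succ ⊗ succ) ∘ c_N, satisfy the commutative comonoid axioms. -/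
open CategoryTheory MonoidalCategory

universe v u

/-- A Paré–Román natural number object in a monoidal category: an object `N` with
`0 : 𝟙 ⟶ N` and `succ : N ⟶ N` such that for every `c : 𝟙 ⟶ A` and `f : A ⟶ A`
there is a unique `h : N ⟶ A` with `h ∘ 0 = c` and `h ∘ succ = f ∘ h`. -/
structure NatNumObj (C : Type u) [Category.{v} C] [MonoidalCategory C] where
  N : C
  zero : 𝟙_ C ⟶ N
  succ : N ⟶ N
  universal : ∀ {A : C} (c : 𝟙_ C ⟶ A) (f : A ⟶ A),
    ∃! h : N ⟶ A, zero ≫ h = c ∧ succ ≫ h = h ≫ f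

variable {C : Type u} [Category.{v} C] [MonoidalCategory C] [SymmetricCategory C]

omit [SymmetricCategory C] in
theorem NatNumObj.uniq (nno : NatNumObj C) {A : C} (c0 : 𝟙_ C ⟶ A) (f : A ⟶ A)
    {h₁ h₂ : nno.N ⟶ A}
    (h10 : nno.zero ≫ h₁ = c0) (h1s : nno.succ ≫ h₁ = h₁ ≫ f)
    (h20 : nno.zero ≫ h₂ = c0) (h2s : nno.succ ≫ h₂ = h₂ ≫ f) : h₁ = h₂ := by
  obtain ⟨h, -, hu⟩ := nno.universal c0 f
  rw [hu h₁ ⟨h10, h1s⟩, hu h₂ ⟨h20, h2s⟩]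

theorem braiding_unit_unit : (β_ (𝟙_ C) (𝟙_ C)).hom = 𝟙 _ := by
  rw [← cancel_mono (λ_ (𝟙_ C)).hom, braiding_leftUnitor,
    Category.id_comp, unitors_equal]

/-- A natural number object in a symmetric monoidal category carries a commutative comonoid
structure, given by the unique `w_N : N ⟶ 𝟙` with `w_N ∘ 0 = id` and `w_N ∘ succ = w_N`, and
the unique `c_N : N ⟶ N ⊗ N` with `c_N ∘ 0 = (0 ⊗ 0) ∘ λ⁻¹` and
`c_N ∘ succ = (succ ⊗ succ) ∘ c_N`. -/
theorem nno_commutative_comonoid (nno : NatNumObj C)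
    (w : nno.N ⟶ 𝟙_ C)
    (hw0 : nno.zero ≫ w = 𝟙 (𝟙_ C)) (hws : nno.succ ≫ w = w)
    (c : nno.N ⟶ nno.N ⊗ nno.N)
    (hc0 : nno.zero ≫ c = (λ_ (𝟙_ C)).inv ≫ (nno.zero ⊗ₘ nno.zero))
    (hcs : nno.succ ≫ c = c ≫ (nno.succ ⊗ₘ nno.succ)) :
    -- counit laws
    (c ≫ (w ▷ nno.N) ≫ (λ_ nno.N).hom = 𝟙 nno.N) ∧
    (c ≫ (nno.N ◁ w) ≫ (ρ_ nno.N).hom = 𝟙 nno.N) ∧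
    -- coassociativity
    (c ≫ (c ▷ nno.N) ≫ (α_ nno.N nno.N nno.N).hom = c ≫ (nno.N ◁ c)) ∧
    -- cocommutativity
    (c ≫ (β_ nno.N nno.N).hom = c) := by
  refine ⟨?_, ?_, ?_, ?_⟩
  · -- left counit
    apply nno.uniq nno.zero nno.succ
    · rw [reassoc_of% hc0, ← tensorHom_id w, tensorHom_comp_tensorHom_assoc, hw0, Category.comp_id,
        id_tensorHom, MonoidalCategory.leftUnitor_naturality, Iso.inv_hom_id_assoc]
    · rw [reassoc_of% hcs, ← tensorHom_id w, tensorHom_comp_tensorHom_assoc, hws, Category.comp_id,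
        tensorHom_def_assoc w nno.succ, MonoidalCategory.leftUnitor_naturality]
      simp only [tensorHom_id, id_tensorHom, Category.assoc]
    · simp
    · simp
  · -- right counit
    apply nno.uniq nno.zero nno.succ
    · rw [reassoc_of% hc0, ← id_tensorHom nno.N w, tensorHom_comp_tensorHom_assoc, hw0, Category.comp_id,
        tensorHom_id, MonoidalCategory.rightUnitor_naturality, ← unitors_equal,
        Iso.inv_hom_id_assoc]
    · rw [reassoc_of% hcs, ← id_tensorHom nno.N w, tensorHom_comp_tensorHom_assoc, hws, Category.comp_id,
        tensorHom_def'_assoc nno.succ w, MonoidalCategory.rightUnitor_naturality]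
      simp only [tensorHom_id, id_tensorHom, Category.assoc]
    · simp
    · simp
  · -- coassociativity
    apply nno.uniq (nno.zero ≫ (c ≫ (c ▷ nno.N) ≫ (α_ nno.N nno.N nno.N).hom))
      (nno.succ ⊗ₘ (nno.succ ⊗ₘ nno.succ))
    · rfl
    · -- succ ≫ (c ≫ (c ▷ N) ≫ α) = (c ≫ (c ▷ N) ≫ α) ≫ (s ⊗ (s ⊗ s))
      simp only [reassoc_of% hcs]
      rw [← tensorHom_id c nno.N, tensorHom_comp_tensorHom_assoc, Category.comp_id, hcs]
      have l4 : (c ≫ (nno.succ ⊗ₘ nno.succ)) ⊗ₘ nno.succ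
          = (c ⊗ₘ 𝟙 nno.N) ≫ ((nno.succ ⊗ₘ nno.succ) ⊗ₘ nno.succ) := by
        rw [tensorHom_comp_tensorHom, Category.id_comp]
      rw [l4]
      simp only [Category.assoc]
      rw [MonoidalCategory.associator_naturality]
    · -- zero ≫ (c ≫ (N ◁ c)) = zero ≫ (c ≫ (c ▷ N) ≫ α)
      simp only [reassoc_of% hc0]
      rw [← tensorHom_id c nno.N, ← id_tensorHom nno.N c, tensorHom_comp_tensorHom_assoc,
        tensorHom_comp_tensorHom]
      simp only [Category.comp_id, hc0]
      have l1 : ((λ_ (𝟙_ C)).inv ≫ (nno.zero ⊗ₘ nno.zero)) ⊗ₘ nno.zero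
          = ((λ_ (𝟙_ C)).inv ⊗ₘ 𝟙 (𝟙_ C)) ≫ ((nno.zero ⊗ₘ nno.zero) ⊗ₘ nno.zero) := by
        rw [tensorHom_comp_tensorHom, Category.id_comp]
      have l2 : nno.zero ⊗ₘ ((λ_ (𝟙_ C)).inv ≫ (nno.zero ⊗ₘ nno.zero))
          = (𝟙 (𝟙_ C) ⊗ₘ (λ_ (𝟙_ C)).inv) ≫ (nno.zero ⊗ₘ (nno.zero ⊗ₘ nno.zero)) := by
        rw [tensorHom_comp_tensorHom, Category.id_comp]
      rw [l1, l2]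
      simp only [Category.assoc]
      rw [MonoidalCategory.associator_naturality]
      have coh : (λ_ (𝟙_ C)).inv ≫ (𝟙 (𝟙_ C) ⊗ₘ (λ_ (𝟙_ C)).inv)
          = (λ_ (𝟙_ C)).inv ≫ (((λ_ (𝟙_ C)).inv ⊗ₘ 𝟙 (𝟙_ C))
            ≫ (α_ (𝟙_ C) (𝟙_ C) (𝟙_ C)).hom) := by
        monoidal
      rw [reassoc_of% coh]
    · -- succ ≫ (c ≫ (N ◁ c)) = (c ≫ (N ◁ c)) ≫ (s ⊗ (s ⊗ s))
      simp only [reassoc_of% hcs]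
      rw [← id_tensorHom nno.N c, tensorHom_comp_tensorHom, Category.comp_id, hcs]
      have l3 : nno.succ ⊗ₘ (c ≫ (nno.succ ⊗ₘ nno.succ))
          = (𝟙 nno.N ⊗ₘ c) ≫ (nno.succ ⊗ₘ (nno.succ ⊗ₘ nno.succ)) := by
        rw [tensorHom_comp_tensorHom, Category.id_comp]
      rw [l3]
      simp only [Category.assoc]
  · -- cocommutativity
    apply nno.uniq ((λ_ (𝟙_ C)).inv ≫ (nno.zero ⊗ₘ nno.zero)) (nno.succ ⊗ₘ nno.succ)
    · rw [reassoc_of% hc0, BraidedCategory.braiding_naturality, braiding_unit_unit,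
        Category.id_comp]
    · rw [reassoc_of% hcs, BraidedCategory.braiding_naturality]
      simp only [Category.assoc]
    · exact hc0
    · exact hcs
end

section
/- Composition of linear functions between coherence spaces corresponds to relational composition of traces: if f : Cl(X) → Cl(Y) and g : Cl(Y) → Cl(Z) are linear, then g ∘ f is linear and tr(g ∘ f) = tr(g) ∘ tr(f) = {(a,c) : ∃ b, (a,b) ∈ tr(f) and (b,c) ∈ tr(g)}. -/
/-- A coherence space. -/
structure CoherenceSpace where
  web : Type
  countable : Countable web
  coh : web → web → Prop
  refl : ∀ a, coh a a
  symm : ∀ a b, coh a b → coh b a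

/-- The cliques of a coherence space, ordered by inclusion. -/
def Clique (X : CoherenceSpace) := {x : Set X.web // x.Pairwise X.coh}

instance {X : CoherenceSpace} : PartialOrder (Clique X) :=
  inferInstanceAs (PartialOrder {x : Set X.web // x.Pairwise X.coh})

/-- The empty clique. -/
def emptyClique (X : CoherenceSpace) : Clique X := ⟨∅, Set.pairwise_empty _⟩

/-- The singleton clique on a token. -/
def singClique (X : CoherenceSpace) (a : X.web) : Clique X :=
  ⟨{a}, Set.pairwise_singleton a _⟩

/-- Compatibility of cliques. -/
def Compat {X : CoherenceSpace} (x y : Set X.web) : Prop := (x ∪ y).Pairwise X.coh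

/-- Linearity of a function between clique spaces: strict, Scott continuous, stable, and
preserving unions of compatible cliques. -/
def IsLinear {X Y : CoherenceSpace} (f : Clique X → Clique Y) : Prop :=
  f (emptyClique X) = emptyClique Y ∧
  ScottContinuous f ∧
  (∀ x y z : Clique X, Compat x.1 y.1 → z.1 = x.1 ∩ y.1 → (f z).1 = (f x).1 ∩ (f y).1) ∧
  (∀ x y w : Clique X, Compat x.1 y.1 → w.1 = x.1 ∪ y.1 → (f w).1 = (f x).1 ∪ (f y).1)

lemma clique_le_iff {X : CoherenceSpace} {x y : Clique X} : x ≤ y ↔ x.1 ⊆ y.1 := Iff.rfl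

lemma linear_finite {X Y : CoherenceSpace} {f : Clique X → Clique Y} (hf : IsLinear f) :
    ∀ (s : Set X.web), s.Finite → ∀ (hs : s.Pairwise X.coh),
      (f ⟨s, hs⟩).1 = ⋃ a ∈ s, (f (singClique X a)).1 := by
  intro s hfin
  refine Set.Finite.induction_on (motive := fun s _ => ∀ hs : s.Pairwise X.coh,
    (f ⟨s, hs⟩).1 = ⋃ a ∈ s, (f (singClique X a)).1) s hfin ?_ ?_
  · intro hs
    have : (⟨∅, hs⟩ : Clique X) = emptyClique X := rfl
    rw [this, hf.1]
    simp [emptyClique]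
  · intro a t ha htfin ih hs
    have hts : t.Pairwise X.coh := hs.mono (Set.subset_insert a t)
    have hcompat : Compat (singClique X a).1 (⟨t, hts⟩ : Clique X).1 := by
      simpa [Compat, singClique, Set.singleton_union] using hs
    have := hf.2.2.2 (singClique X a) ⟨t, hts⟩ ⟨insert a t, hs⟩ hcompat
      (by simp [singClique, Set.singleton_union])
    rw [this, ih hts]
    simp [Set.biUnion_insert]

lemma linear_pointwise {X Y : CoherenceSpace} {f : Clique X → Clique Y} (hf : IsLinear f)
    (x : Clique X) : (f x).1 = ⋃ a ∈ x.1, (f (singClique X a)).1 := by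
  have hmono : Monotone f := hf.2.1.monotone
  set d : Set (Clique X) := {s | s.1 ⊆ x.1 ∧ s.1.Finite} with hd
  have hne : d.Nonempty := ⟨emptyClique X, Set.empty_subset _, Set.finite_empty⟩
  have hdir : DirectedOn (· ≤ ·) d := by
    rintro s ⟨hs1, hs2⟩ t ⟨ht1, ht2⟩
    refine ⟨⟨s.1 ∪ t.1, x.2.mono (Set.union_subset hs1 ht1)⟩,
      ⟨Set.union_subset hs1 ht1, hs2.union ht2⟩, ?_, ?_⟩
    · exact Set.subset_union_left
    · exact Set.subset_union_right
  have hlub : IsLUB d x := by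
    constructor
    · rintro s ⟨hs1, _⟩; exact hs1
    · intro z hz
      intro a ha
      have : singClique X a ∈ d := ⟨by simpa [singClique] using ha, Set.finite_singleton a⟩
      exact hz this rfl
  have hflub : IsLUB (f '' d) (f x) := hf.2.1 hne hdir hlub
  have hsub : (⋃ a ∈ x.1, (f (singClique X a)).1) ⊆ (f x).1 := by
    intro c hc
    simp only [Set.mem_iUnion] at hc
    obtain ⟨a, ha, hc⟩ := hc
    exact hmono (show singClique X a ≤ x from clique_le_iff.mpr (by simpa [singClique] using ha)) hc
  apply Set.Subset.antisymm _ hsub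
  have hU : (⋃ a ∈ x.1, (f (singClique X a)).1).Pairwise Y.coh := (f x).2.mono hsub
  have : f x ≤ ⟨_, hU⟩ := hflub.2 (by
    rintro _ ⟨s, ⟨hs1, hs2⟩, rfl⟩
    refine clique_le_iff.mpr ?_
    rw [show s = ⟨s.1, s.2⟩ from rfl, linear_finite hf s.1 hs2 s.2]
    exact Set.biUnion_mono hs1 (fun _ _ => le_rfl))
  exact this

/-- Composition of linear maps between coherence spaces is linear, and corresponds to
relational composition of traces:
`tr(g ∘ f) = {(a,c) : ∃ b, (a,b) ∈ tr(f) ∧ (b,c) ∈ tr(g)}`. -/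
theorem comp_linear_trace {X Y Z : CoherenceSpace}
    (f : Clique X → Clique Y) (g : Clique Y → Clique Z)
    (hf : IsLinear f) (hg : IsLinear g) :
    IsLinear (g ∘ f) ∧
    ∀ (a : X.web) (c : Z.web),
      c ∈ (g (f (singClique X a))).1 ↔
        ∃ b : Y.web, b ∈ (f (singClique X a)).1 ∧ c ∈ (g (singClique Y b)).1 := by
  constructor
  · refine ⟨?_, ?_, ?_, ?_⟩
    · simp [Function.comp, hf.1, hg.1]
    · intro d hne hdir a hlub
      have h1 := hf.2.1 hne hdir hlub
      have h2 := hg.2.1 (hne.image f) (directedOn_image.mpr (hdir.mono' (fun _ _ _ _ h => hf.2.1.monotone h))) h1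
      simpa [Set.image_image] using h2
    · intro x y z hxy hz
      have hcompat : Compat (f x).1 (f y).1 := by
        have := hf.2.2.2 x y ⟨x.1 ∪ y.1, hxy⟩ hxy rfl
        rw [Compat, ← this]
        exact (f _).2
      exact hg.2.2.1 (f x) (f y) (f z) hcompat (hf.2.2.1 x y z hxy hz)
    · intro x y w hxy hw
      have hcompat : Compat (f x).1 (f y).1 := by
        have := hf.2.2.2 x y ⟨x.1 ∪ y.1, hxy⟩ hxy rfl
        rw [Compat, ← this]
        exact (f _).2
      exact hg.2.2.2 (f x) (f y) (f w) hcompat (hf.2.2.2 x y w hxy hw)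
  · intro a c
    rw [linear_pointwise hg (f (singClique X a))]
    simp [Set.mem_iUnion]
end
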